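/- arXiv:2510.13613 — 3 statements merged into one kernel-verified Lean document; each statement's English description precedes it below -/
import Mathlib

section
/- For e ≥ 1, the code D = {(1,1), (e+2,e+2), (2e+3,2e+3), (1,2e+3), (2e+3,1)} is an e-quasi-perfect code in P_{2e+3} □ P_{2e+3}: distinct codewords are at distance at least 2e+2, and the covering radius of D is exactly e+1. -/
/-- Distance between labels on a path: `|x - y|`. -/
def pathDist (x y : ℕ) : ℕ := ((x : ℤ) - y).natAbs

theorem quasi_perfect_in_P2e3_box_P2e3 (e : ℕ) (he : 1 ≤ e) :
    -- vertex set of P_{2e+3} □ P_{2e+3}, with labels 1,…,2e+3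
    let V : Set (ℕ × ℕ) :=
      {p | 1 ≤ p.1 ∧ p.1 ≤ 2 * e + 3 ∧ 1 ≤ p.2 ∧ p.2 ≤ 2 * e + 3}
    let dist : ℕ × ℕ → ℕ × ℕ → ℕ :=
      fun p q => pathDist p.1 q.1 + pathDist p.2 q.2
    let D : Set (ℕ × ℕ) :=
      {(1, 1), (e + 2, e + 2), (2 * e + 3, 2 * e + 3), (1, 2 * e + 3), (2 * e + 3, 1)}
    -- distinct codewords are at distance at least 2e+2
    (∀ p ∈ D, ∀ q ∈ D, p ≠ q → 2 * e + 2 ≤ dist p q) ∧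
    -- covering radius exactly e+1
    (∀ v ∈ V, ∃ d ∈ D, dist v d ≤ e + 1) ∧
    (∃ v ∈ V, ∀ d ∈ D, e + 1 ≤ dist v d) := by
  intro V dist D
  refine ⟨?_, ?_, ?_⟩
  · intro p hp q hq hne
    simp only [D, Set.mem_insert_iff, Set.mem_singleton_iff] at hp hq
    rcases hp with h | h | h | h | h <;> subst h <;>
      rcases hq with h | h | h | h | h <;> subst h <;>
      simp_all [dist, pathDist, Prod.ext_iff] <;> omega
  · rintro ⟨a, b⟩ ⟨ha1, ha2, hb1, hb2⟩
    have key : (pathDist a 1 + pathDist b 1 ≤ e + 1) ∨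
        (pathDist a (e + 2) + pathDist b (e + 2) ≤ e + 1) ∨
        (pathDist a (2 * e + 3) + pathDist b (2 * e + 3) ≤ e + 1) ∨
        (pathDist a 1 + pathDist b (2 * e + 3) ≤ e + 1) ∨
        (pathDist a (2 * e + 3) + pathDist b 1 ≤ e + 1) := by
      simp only [pathDist]; omega
    rcases key with h | h | h | h | h
    · exact ⟨(1, 1), by simp [D], h⟩
    · exact ⟨(e + 2, e + 2), by simp [D], h⟩
    · exact ⟨(2 * e + 3, 2 * e + 3), by simp [D], h⟩
    · exact ⟨(1, 2 * e + 3), by simp [D], h⟩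
    · exact ⟨(2 * e + 3, 1), by simp [D], h⟩
  · refine ⟨(1, e + 2), ⟨by omega, by omega, by omega, by omega⟩, ?_⟩
    intro d hd
    simp only [D, Set.mem_insert_iff, Set.mem_singleton_iff] at hd
    rcases hd with h | h | h | h | h <;> subst h <;> simp [dist, pathDist] <;> omega
end

section
/- For all n ≥ 2, the set D = {(0,0,0), (n−1,n−1,1)} is a perfect (n−1)-error-correcting code in P_n □ P_n □ P_2: the two codewords are at distance 2(n−1)+1 = 2n−1, and every vertex is within distance n−1 of some codeword. -/
lemma pathDist_eq (x y : ℕ) : pathDist x y = max x y - min x y := by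
  unfold pathDist; omega

theorem perfect_code_in_Pn_Pn_P2 (n : ℕ) (hn : 2 ≤ n) :
    -- L1 distance in P_n □ P_n □ P_2
    let dist : Fin n × Fin n × Fin 2 → Fin n × Fin n × Fin 2 → ℕ :=
      fun p q => pathDist p.1.val q.1.val + pathDist p.2.1.val q.2.1.val +
        pathDist p.2.2.val q.2.2.val
    let c0 : Fin n × Fin n × Fin 2 := (⟨0, by omega⟩, ⟨0, by omega⟩, 0)
    let c1 : Fin n × Fin n × Fin 2 := (⟨n - 1, by omega⟩, ⟨n - 1, by omega⟩, 1)
    let D : Set (Fin n × Fin n × Fin 2) := {c0, c1}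
    -- the two codewords are at distance 2(n-1)+1 = 2n-1
    dist c0 c1 = 2 * n - 1 ∧
    -- every vertex is within distance n-1 of some codeword
    (∀ v : Fin n × Fin n × Fin 2, ∃ d ∈ D, dist v d ≤ n - 1) := by
  intro dist c0 c1 D
  constructor
  · simp only [dist, c0, c1, pathDist_eq]
    simp [Fin.val]
    omega
  · rintro ⟨⟨a, ha⟩, ⟨b, hb⟩, ⟨c, hc⟩⟩
    by_cases h : a + b + c ≤ n - 1
    · exact ⟨c0, Or.inl rfl, by simp only [dist, c0, pathDist_eq]; simp; omega⟩
    · exact ⟨c1, Or.inr rfl, by simp only [dist, c1, pathDist_eq]; simp; omega⟩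
end

section
/- For each n with 14 ≤ n ≤ 19, the set D = {(2i mod n, 3i mod n) : 0 ≤ i < n} is a quasi-perfect 2-error-correcting code in C_n □ C_n: distinct codewords are at distance at least 5 and the covering radius of D is exactly 3. -/
/-- Cyclic distance on `Z_n`: `min (|x - y|, n - |x - y|)`. -/
def cycDist (n x y : ℕ) : ℕ := min ((x : ℤ) - y).natAbs (n - ((x : ℤ) - y).natAbs)

set_option maxRecDepth 100000 in
set_option maxHeartbeats 2000000 in
theorem quasi_perfect_code_in_Cn_Cn_14_19 (n : ℕ) (hn : 14 ≤ n) (hn' : n ≤ 19) :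
    -- distance in C_n □ C_n
    let dist : Fin n × Fin n → Fin n × Fin n → ℕ :=
      fun p q => cycDist n p.1.val q.1.val + cycDist n p.2.val q.2.val
    -- D = {(2i mod n, 3i mod n) : 0 ≤ i < n}
    let D : Set (Fin n × Fin n) :=
      {p | ∃ i < n, p.1.val = (2 * i) % n ∧ p.2.val = (3 * i) % n}
    -- distinct codewords are at distance at least 5
    (∀ p ∈ D, ∀ q ∈ D, p ≠ q → 5 ≤ dist p q) ∧
    -- covering radius exactly 3
    (∀ v : Fin n × Fin n, ∃ d ∈ D, dist v d ≤ 3) ∧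
    (∃ v : Fin n × Fin n, ∀ d ∈ D, 3 ≤ dist v d) := by
  intro dist D
  have hpos : 0 < n := by omega
  refine ⟨?_, ?_, ?_⟩
  · suffices h : ∀ i < n, ∀ j < n,
        ¬(2 * i % n = 2 * j % n ∧ 3 * i % n = 3 * j % n) →
        5 ≤ cycDist n (2 * i % n) (2 * j % n) + cycDist n (3 * i % n) (3 * j % n) by
      rintro p ⟨i, hi, h1, h2⟩ q ⟨j, hj, h3, h4⟩ hne
      have : 5 ≤ cycDist n (2 * i % n) (2 * j % n) + cycDist n (3 * i % n) (3 * j % n) := by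
        refine h i hi j hj ?_
        rintro ⟨e1, e2⟩
        exact hne (Prod.ext (Fin.ext (h1.trans (e1.trans h3.symm)))
          (Fin.ext (h2.trans (e2.trans h4.symm))))
      simpa [dist, h1, h2, h3, h4] using this
    interval_cases n <;> decide
  · suffices h : ∀ v : Fin n × Fin n,
        ∃ i < n, cycDist n v.1.val (2 * i % n) + cycDist n v.2.val (3 * i % n) ≤ 3 by
      intro v
      obtain ⟨i, hi, hle⟩ := h v
      refine ⟨(⟨2 * i % n, Nat.mod_lt _ hpos⟩, ⟨3 * i % n, Nat.mod_lt _ hpos⟩),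
        ⟨i, hi, rfl, rfl⟩, hle⟩
    interval_cases n <;> decide
  · suffices h : ∃ v : Fin n × Fin n,
        ∀ i < n, 3 ≤ cycDist n v.1.val (2 * i % n) + cycDist n v.2.val (3 * i % n) by
      obtain ⟨v, hv⟩ := h
      refine ⟨v, ?_⟩
      rintro d ⟨i, hi, h1, h2⟩
      simpa [dist, h1, h2] using hv i hi
    interval_cases n <;> decide
end
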